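/- Let (Ω, ρ) be a compact metric space with a Borel probability measure P containing the set ℕ of non-negative integers as a dense subset, and for S ⊆ ℕ set π*(S) = P(cl(S)), Y = {A ⊆ ℕ : π*(A) + π*(ℕ \ A) = 1}, and π = π*|_Y. Let ω : Ω → [0,1] be a continuous function, and suppose that the sequence {n}_{n∈ℕ} (the identity sequence of non-negative integers) is uniformly distributed in Ω. Then the sequence {ω(n)}_{n∈ℕ} is π-uniformly measurable if and only if it is uniformly distributed modulo 1. -/

import Mathlib

open MeasureTheory Filter Topology

open scoped Classical

/-- A sequence `a : ℕ → Ω` is uniformly distributed in `Ω` with respect to the Borel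
probability measure `P` if the averages of `g` along the sequence converge to `∫ g dP`
for every continuous real-valued `g` on `Ω`. -/
def UniformlyDistributed {Ω : Type*} [MetricSpace Ω] [MeasurableSpace Ω]
    (P : Measure Ω) (a : ℕ → Ω) : Prop :=
  ∀ g : C(Ω, ℝ),
    Tendsto (fun N : ℕ => (∑ n ∈ Finset.range N, g (a n)) / N) atTop (𝓝 (∫ x, g x ∂P))

/-- A mapping `x : M → [0,1]` is `π`-uniformly measurable if for each subinterval
`I ⊆ [0,1]` the preimage `x⁻¹(I)` belongs to `Y` and `π (x⁻¹(I)) = |I|`. -/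
def UnifMeasurable {α : Type*} (Y : Set (Set α)) (π : Set α → ℝ) (x : α → ℝ) : Prop :=
  ∀ a b : ℝ, 0 ≤ a → a ≤ b → b ≤ 1 →
    ∀ I : Set ℝ, (I = Set.Icc a b ∨ I = Set.Ico a b ∨ I = Set.Ioc a b ∨ I = Set.Ioo a b) →
      x ⁻¹' I ∈ Y ∧ π (x ⁻¹' I) = b - a

/-- A sequence `x : ℕ → [0,1]` is uniformly distributed modulo 1 if for every subinterval
`I ⊆ [0,1]` the set `{n : xₙ ∈ I}` has asymptotic density equal to `|I|`. -/
def UDMod1 (x : ℕ → ℝ) : Prop :=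
  ∀ a b : ℝ, 0 ≤ a → a ≤ b → b ≤ 1 →
    ∀ I : Set ℝ, (I = Set.Icc a b ∨ I = Set.Ico a b ∨ I = Set.Ioc a b ∨ I = Set.Ioo a b) →
      Tendsto (fun N : ℕ => (∑ n ∈ Finset.range N, if x n ∈ I then (1 : ℝ) else 0) / N)
        atTop (𝓝 (b - a))

lemma tendsto_of_eps' {u : ℕ → ℝ} {L : ℝ}
    (h : ∀ ε : ℝ, 0 < ε → ∀ᶠ N in atTop, L - ε ≤ u N ∧ u N ≤ L + ε) :
    Tendsto u atTop (𝓝 L) := by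
  rw [Metric.tendsto_atTop]
  intro ε hε
  obtain ⟨N₀, hN₀⟩ := eventually_atTop.mp (h (ε / 2) (by linarith))
  refine ⟨N₀, fun n hn => ?_⟩
  obtain ⟨h1, h2⟩ := hN₀ n hn
  rw [Real.dist_eq, abs_lt]
  constructor <;> linarith

lemma sum_indicator_split (S T : Set ℕ) (h : ∀ n : ℕ, n ∈ T ↔ n ∉ S) (N : ℕ) :
    (∑ n ∈ Finset.range N, if n ∈ S then (1 : ℝ) else 0)
      + (∑ n ∈ Finset.range N, if n ∈ T then (1 : ℝ) else 0) = N := by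
  rw [← Finset.sum_add_distrib]
  have : ∀ n ∈ Finset.range N,
      ((if n ∈ S then (1 : ℝ) else 0) + if n ∈ T then (1 : ℝ) else 0) = 1 := by
    intro n _
    by_cases hn : n ∈ S <;> simp [hn, h n]
  rw [Finset.sum_congr rfl this]
  simp

lemma avg_le_of_closed {Ω : Type*} [MetricSpace Ω] [CompactSpace Ω]
    [MeasurableSpace Ω] [BorelSpace Ω] (P : Measure Ω) [IsProbabilityMeasure P]
    (ι : ℕ → Ω) (hUD : UniformlyDistributed P ι)
    (S : Set ℕ) {F : Set Ω} (hF : IsClosed F) (hSF : ∀ n ∈ S, ι n ∈ F)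
    {ε : ℝ} (hε : 0 < ε) :
    ∀ᶠ N in atTop,
      (∑ n ∈ Finset.range N, if n ∈ S then (1 : ℝ) else 0) / N ≤ (P F).toReal + ε := by
  obtain ⟨U, hFU, hUopen, hU⟩ := Set.exists_isOpen_lt_of_lt F (P F + ENNReal.ofReal (ε / 2))
    (ENNReal.lt_add_right (measure_ne_top P F)
      ((ENNReal.ofReal_pos.mpr (by linarith)).ne'))
  obtain ⟨g, hg0, hg1, hg01⟩ := exists_continuous_zero_one_of_isClosed
    (isClosed_compl_iff.mpr hUopen) hF
    (Set.disjoint_left.mpr fun x hx hxF => hx (hFU hxF))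
  have hgint : Integrable (fun t => g t) P :=
    g.continuous.integrable_of_hasCompactSupport (HasCompactSupport.of_compactSpace _)
  have hIg : ∫ x, g x ∂P ≤ (P U).toReal := by
    have hmono : ∫ x, g x ∂P ≤ ∫ x, U.indicator (fun _ => (1 : ℝ)) x ∂P := by
      refine integral_mono hgint ((integrable_const (1 : ℝ)).indicator hUopen.measurableSet) ?_
      intro x
      by_cases hx : x ∈ U
      · simp only [Set.indicator_of_mem hx]
        exact (hg01 x).2
      · have hx0 : g x = 0 := hg0 hx
        simp [Set.indicator_of_notMem hx, hx0]
    rwa [integral_indicator_const (1 : ℝ) hUopen.measurableSet, smul_eq_mul, mul_one] at hmono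
  have hPU : (P U).toReal ≤ (P F).toReal + ε / 2 := by
    have h1 : (P U).toReal ≤ (P F + ENNReal.ofReal (ε / 2)).toReal :=
      ENNReal.toReal_mono
        (ENNReal.add_ne_top.mpr ⟨measure_ne_top P F, ENNReal.ofReal_ne_top⟩) hU.le
    rwa [ENNReal.toReal_add (measure_ne_top P F) ENNReal.ofReal_ne_top,
      ENNReal.toReal_ofReal (by linarith)] at h1
  have hev : ∀ᶠ N in atTop,
      (∑ n ∈ Finset.range N, g (ι n)) / N ≤ ∫ x, g x ∂P + ε / 2 :=
    (hUD g).eventually (eventually_le_nhds (by linarith))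
  filter_upwards [hev] with N hN
  have hsum : (∑ n ∈ Finset.range N, if n ∈ S then (1 : ℝ) else 0)
      ≤ ∑ n ∈ Finset.range N, g (ι n) := by
    refine Finset.sum_le_sum fun n _ => ?_
    by_cases hn : n ∈ S
    · simp only [hn, if_true]
      exact (hg1 (hSF n hn)).ge
    · simp only [hn, if_false]
      exact (hg01 _).1
  have hdiv : (∑ n ∈ Finset.range N, if n ∈ S then (1 : ℝ) else 0) / N
      ≤ (∑ n ∈ Finset.range N, g (ι n)) / N := by
    gcongr
  linarith

lemma tendsto_avg_of_pis {Ω : Type*} [MetricSpace Ω] [CompactSpace Ω]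
    [MeasurableSpace Ω] [BorelSpace Ω] (P : Measure Ω) [IsProbabilityMeasure P]
    (ι : ℕ → Ω) (hUD : UniformlyDistributed P ι)
    (S : Set ℕ) (L : ℝ)
    (h1 : (P (closure (ι '' S))).toReal = L)
    (h2 : (P (closure (ι '' (Set.univ \ S)))).toReal = 1 - L) :
    Tendsto (fun N : ℕ => (∑ n ∈ Finset.range N, if n ∈ S then (1 : ℝ) else 0) / N)
      atTop (𝓝 L) := by
  apply tendsto_of_eps'
  intro ε hε
  set T := Set.univ \ S with hT
  clear_value T
  have hA := avg_le_of_closed P ι hUD S (F := closure (ι '' S)) isClosed_closure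
    (fun n hn => subset_closure (Set.mem_image_of_mem ι hn)) hε
  have hB := avg_le_of_closed P ι hUD T (F := closure (ι '' T)) isClosed_closure
    (fun n hn => subset_closure (Set.mem_image_of_mem ι hn)) hε
  rw [h1] at hA
  rw [h2] at hB
  filter_upwards [hA, hB, eventually_ge_atTop 1] with N hAN hBN hN1
  have hNpos : (0 : ℝ) < N := by exact_mod_cast hN1
  have hsplit := sum_indicator_split S T (fun n => by rw [hT]; simp) N
  have hsum1 : (∑ n ∈ Finset.range N, if n ∈ S then (1 : ℝ) else 0) / N
      + (∑ n ∈ Finset.range N, if n ∈ T then (1 : ℝ) else 0) / N = 1 := by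
    rw [← add_div, hsplit, div_self hNpos.ne']
  constructor
  · linarith
  · linarith

lemma meas_Icc_le {Ω : Type*} [MetricSpace Ω] [CompactSpace Ω]
    [MeasurableSpace Ω] [BorelSpace Ω] (P : Measure Ω) [IsProbabilityMeasure P]
    (ι : ℕ → Ω) (hUD : UniformlyDistributed P ι)
    (ω : Ω → ℝ) (hω : Continuous ω) (hω01 : ∀ t : Ω, ω t ∈ Set.Icc (0 : ℝ) 1)
    (hx : UDMod1 (fun n => ω (ι n)))
    {a b : ℝ} (ha : 0 ≤ a) (hab : a ≤ b) (hb : b ≤ 1) :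
    (P (ω ⁻¹' Set.Icc a b)).toReal ≤ b - a := by
  apply le_of_forall_pos_le_add
  intro δ hδ
  have hε : (0 : ℝ) < δ / 2 := by linarith
  set ε := δ / 2 with hεdef
  set a' := max (a - ε) 0 with ha'def
  set b' := min (b + ε) 1 with hb'def
  have ha' : 0 ≤ a' := le_max_right _ _
  have ha'a : a' ≤ a := max_le (by linarith) ha
  have hbb' : b ≤ b' := le_min (by linarith) hb
  have ha'b' : a' ≤ b' := le_trans ha'a (le_trans hab hbb')
  have hb' : b' ≤ 1 := min_le_right _ _
  have hIcc : (Set.Icc a b).Nonempty := Set.nonempty_Icc.mpr hab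
  set h : ℝ → ℝ := fun t => max 0 (1 - ε⁻¹ * Metric.infDist t (Set.Icc a b)) with hh
  have hcont : Continuous h :=
    continuous_const.max
      (continuous_const.sub (continuous_const.mul (Metric.continuous_infDist_pt _)))
  set f : C(Ω, ℝ) := ⟨fun t => h (ω t), hcont.comp hω⟩ with hf
  have hf0 : ∀ t, 0 ≤ f t := fun t => le_max_left _ _
  have hf1 : ∀ t, f t ≤ 1 := by
    intro t
    refine max_le (by norm_num) ?_
    have h1 := Metric.infDist_nonneg (s := Set.Icc a b) (x := ω t)
    have h2 : (0 : ℝ) ≤ ε⁻¹ := inv_nonneg.mpr hε.le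
    nlinarith
  have hfmem : ∀ t, t ∈ ω ⁻¹' Set.Icc a b → f t = 1 := by
    intro t ht
    show max 0 (1 - ε⁻¹ * Metric.infDist (ω t) (Set.Icc a b)) = 1
    rw [Metric.infDist_zero_of_mem (show ω t ∈ Set.Icc a b from ht)]
    norm_num
  have hfout : ∀ n : ℕ, ω (ι n) ∉ Set.Icc a' b' → f (ι n) = 0 := by
    intro n hn
    have ht01 := hω01 (ι n)
    have hdist : ε ≤ Metric.infDist (ω (ι n)) (Set.Icc a b) := by
      by_contra hlt
      push_neg at hlt
      obtain ⟨y, hy, hd⟩ := (Metric.infDist_lt_iff hIcc).mp hlt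
      rw [Set.mem_Icc, not_and_or, not_le, not_le] at hn
      rcases hn with h1 | h2
      · have h3 : ω (ι n) < a - ε ∨ ω (ι n) < 0 := lt_max_iff.mp h1
        have h4 : ω (ι n) < a - ε := by
          rcases h3 with h3 | h3
          · exact h3
          · exact absurd h3 (not_lt.mpr ht01.1)
        have h5 : ε < dist (ω (ι n)) y := by
          rw [Real.dist_eq]
          have := le_abs_self (y - ω (ι n))
          rw [abs_sub_comm] at this
          linarith [hy.1]
        linarith
      · have h3 : b + ε < ω (ι n) ∨ 1 < ω (ι n) := min_lt_iff.mp h2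
        have h4 : b + ε < ω (ι n) := by
          rcases h3 with h3 | h3
          · exact h3
          · exact absurd h3 (not_lt.mpr ht01.2)
        have h5 : ε < dist (ω (ι n)) y := by
          rw [Real.dist_eq]
          have := le_abs_self (ω (ι n) - y)
          linarith [hy.2]
        linarith
    show max 0 (1 - ε⁻¹ * Metric.infDist (ω (ι n)) (Set.Icc a b)) = 0
    apply max_eq_left
    have h6 : ε⁻¹ * ε ≤ ε⁻¹ * Metric.infDist (ω (ι n)) (Set.Icc a b) :=
      mul_le_mul_of_nonneg_left hdist (inv_nonneg.mpr hε.le)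
    rw [inv_mul_cancel₀ hε.ne'] at h6
    linarith
  have hfint : Integrable (fun t => f t) P :=
    f.continuous.integrable_of_hasCompactSupport (HasCompactSupport.of_compactSpace _)
  have hmeas : MeasurableSet (ω ⁻¹' Set.Icc a b) := hω.measurable measurableSet_Icc
  have h1 : (P (ω ⁻¹' Set.Icc a b)).toReal ≤ ∫ t, f t ∂P := by
    have hmono : ∫ t, (ω ⁻¹' Set.Icc a b).indicator (fun _ => (1 : ℝ)) t ∂P
        ≤ ∫ t, f t ∂P := by
      refine integral_mono ((integrable_const (1 : ℝ)).indicator hmeas) hfint ?_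
      intro t
      by_cases ht : t ∈ ω ⁻¹' Set.Icc a b
      · simp [Set.indicator_of_mem ht, hfmem t ht]
      · simp only [Set.indicator_of_notMem ht]
        exact hf0 t
    rwa [integral_indicator_const (1 : ℝ) hmeas, smul_eq_mul, mul_one] at hmono
  have hJ := hx a' b' ha' ha'b' hb' (Set.Icc a' b') (Or.inl rfl)
  have h2 : ∫ t, f t ∂P ≤ b' - a' := by
    beta_reduce at hJ
    refine le_of_tendsto_of_tendsto' (hUD f) hJ fun N => ?_
    rcases Nat.eq_zero_or_pos N with rfl | hN
    · simp
    · have hNpos : (0 : ℝ) < N := by exact_mod_cast hN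
      apply div_le_div_of_nonneg_right ?_ hNpos.le
      refine Finset.sum_le_sum fun n _ => ?_
      by_cases hn : ω (ι n) ∈ Set.Icc a' b'
      · rw [if_pos hn]
        exact hf1 (ι n)
      · rw [if_neg hn]
        exact (hfout n hn).le
  have h3 : b' - a' ≤ b - a + δ := by
    have := min_le_left (b + ε) 1
    have := le_max_left (a - ε) 0
    rw [hεdef] at *
    simp only [ha'def, hb'def, hεdef]
    have h4 : min (b + δ / 2) 1 ≤ b + δ / 2 := min_le_left _ _
    have h5 : a - δ / 2 ≤ max (a - δ / 2) 0 := le_max_left _ _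
    linarith
  linarith

lemma meas_Icc_eq {Ω : Type*} [MetricSpace Ω] [CompactSpace Ω]
    [MeasurableSpace Ω] [BorelSpace Ω] (P : Measure Ω) [IsProbabilityMeasure P]
    (ι : ℕ → Ω) (hUD : UniformlyDistributed P ι)
    (ω : Ω → ℝ) (hω : Continuous ω) (hω01 : ∀ t : Ω, ω t ∈ Set.Icc (0 : ℝ) 1)
    (hx : UDMod1 (fun n => ω (ι n)))
    {a b : ℝ} (ha : 0 ≤ a) (hab : a ≤ b) (hb : b ≤ 1) :
    (P (ω ⁻¹' Set.Icc a b)).toReal = b - a := by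
  have hA := meas_Icc_le P ι hUD ω hω hω01 hx (le_refl (0:ℝ)) ha (hab.trans hb)
  have hB := meas_Icc_le P ι hUD ω hω hω01 hx ha hab hb
  have hC := meas_Icc_le P ι hUD ω hω hω01 hx (ha.trans hab) hb (le_refl (1:ℝ))
  have hsub : (Set.univ : Set Ω)
      ⊆ ω ⁻¹' Set.Icc 0 a ∪ (ω ⁻¹' Set.Icc a b ∪ ω ⁻¹' Set.Icc b 1) := by
    intro t _
    have ht01 := hω01 t
    rcases le_or_gt (ω t) a with h | h
    · exact Or.inl ⟨ht01.1, h⟩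
    · rcases le_or_gt (ω t) b with h' | h'
      · exact Or.inr (Or.inl ⟨h.le, h'⟩)
      · exact Or.inr (Or.inr ⟨h'.le, ht01.2⟩)
  have hone : (1 : ENNReal) ≤ P (ω ⁻¹' Set.Icc 0 a)
      + (P (ω ⁻¹' Set.Icc a b) + P (ω ⁻¹' Set.Icc b 1)) := by
    calc (1 : ENNReal) = P Set.univ := (measure_univ).symm
      _ ≤ P (ω ⁻¹' Set.Icc 0 a ∪ (ω ⁻¹' Set.Icc a b ∪ ω ⁻¹' Set.Icc b 1)) :=
          measure_mono hsub
      _ ≤ P (ω ⁻¹' Set.Icc 0 a) + P (ω ⁻¹' Set.Icc a b ∪ ω ⁻¹' Set.Icc b 1) :=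
          measure_union_le _ _
      _ ≤ _ := add_le_add le_rfl (measure_union_le _ _)
  have hfin : P (ω ⁻¹' Set.Icc 0 a) + (P (ω ⁻¹' Set.Icc a b) + P (ω ⁻¹' Set.Icc b 1)) ≠ ⊤ :=
    ENNReal.add_ne_top.mpr ⟨measure_ne_top P _,
      ENNReal.add_ne_top.mpr ⟨measure_ne_top P _, measure_ne_top P _⟩⟩
  have hone' : (1 : ℝ) ≤ (P (ω ⁻¹' Set.Icc 0 a)).toReal
      + ((P (ω ⁻¹' Set.Icc a b)).toReal + (P (ω ⁻¹' Set.Icc b 1)).toReal) := by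
    have := ENNReal.toReal_mono hfin hone
    rwa [ENNReal.toReal_one, ENNReal.toReal_add (measure_ne_top P _)
      (ENNReal.add_ne_top.mpr ⟨measure_ne_top P _, measure_ne_top P _⟩),
      ENNReal.toReal_add (measure_ne_top P _) (measure_ne_top P _)] at this
  linarith

lemma pis_sum_ge_one {Ω : Type*} [MetricSpace Ω] [CompactSpace Ω]
    [MeasurableSpace Ω] [BorelSpace Ω] (P : Measure Ω) [IsProbabilityMeasure P]
    (ι : ℕ → Ω) (hdense : DenseRange ι) (S : Set ℕ) :
    1 ≤ (P (closure (ι '' S))).toReal + (P (closure (ι '' (Set.univ \ S)))).toReal := by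
  have hcover : (Set.univ : Set Ω) ⊆ closure (ι '' S) ∪ closure (ι '' (Set.univ \ S)) := by
    rw [← closure_union, ← Set.image_union]
    have : S ∪ (Set.univ \ S) = Set.univ := by
      ext n; by_cases hn : n ∈ S <;> simp [hn]
    rw [this, Set.image_univ, hdense.closure_eq]
  have hone : (1 : ENNReal) ≤ P (closure (ι '' S)) + P (closure (ι '' (Set.univ \ S))) :=
    calc (1 : ENNReal) = P Set.univ := (measure_univ).symm
      _ ≤ P (closure (ι '' S) ∪ closure (ι '' (Set.univ \ S))) := measure_mono hcover
      _ ≤ _ := measure_union_le _ _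
  have := ENNReal.toReal_mono
    (ENNReal.add_ne_top.mpr ⟨measure_ne_top P _, measure_ne_top P _⟩) hone
  rwa [ENNReal.toReal_one, ENNReal.toReal_add (measure_ne_top P _) (measure_ne_top P _)]
    at this

theorem unifMeasurable_iff_udMod1 {Ω : Type*} [MetricSpace Ω] [CompactSpace Ω]
    [MeasurableSpace Ω] [BorelSpace Ω] (P : Measure Ω) [IsProbabilityMeasure P]
    (ι : ℕ → Ω) (hι : Function.Injective ι) (hdense : DenseRange ι)
    (πs : Set ℕ → ℝ) (hπs : ∀ S : Set ℕ, πs S = (P (closure (ι '' S))).toReal)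
    (Y : Set (Set ℕ)) (hY : Y = {A : Set ℕ | πs A + πs (Set.univ \ A) = 1})
    (ω : Ω → ℝ) (hω : Continuous ω) (hω01 : ∀ t : Ω, ω t ∈ Set.Icc (0 : ℝ) 1)
    (hUD : UniformlyDistributed P ι) :
    UnifMeasurable Y πs (fun n => ω (ι n)) ↔ UDMod1 (fun n => ω (ι n)) := by
  constructor
  · intro hUM a b ha hab hb I hI
    obtain ⟨hYmem, hval⟩ := hUM a b ha hab hb I hI
    rw [hY] at hYmem
    simp only [Set.mem_setOf_eq] at hYmem
    rw [hπs] at hval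
    rw [hπs, hπs] at hYmem
    have h2 : (P (closure (ι '' (Set.univ \ ((fun n => ω (ι n)) ⁻¹' I))))).toReal
        = 1 - (b - a) := by linarith
    have hT := tendsto_avg_of_pis P ι hUD ((fun n => ω (ι n)) ⁻¹' I) (b - a) hval h2
    simpa only [Set.mem_preimage] using hT
  · intro hUDm1 a b ha hab hb I hI
    set S := (fun n => ω (ι n)) ⁻¹' I with hS
    have hIsub : I ⊆ Set.Icc a b := by
      rcases hI with rfl | rfl | rfl | rfl
      · exact subset_rfl
      · exact Set.Ico_subset_Icc_self
      · exact Set.Ioc_subset_Icc_self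
      · exact Set.Ioo_subset_Icc_self
    have himg1 : closure (ι '' S) ⊆ ω ⁻¹' Set.Icc a b := by
      apply closure_minimal _ (isClosed_Icc.preimage hω)
      rintro t ⟨n, hn, rfl⟩
      exact hIsub hn
    have hub : πs S ≤ b - a := by
      rw [hπs]
      have h' := ENNReal.toReal_mono (measure_ne_top P _) (measure_mono himg1)
      rwa [meas_Icc_eq P ι hUD ω hω hω01 hUDm1 ha hab hb] at h'
    have himg2 : closure (ι '' (Set.univ \ S))
        ⊆ ω ⁻¹' Set.Icc 0 a ∪ ω ⁻¹' Set.Icc b 1 := by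
      apply closure_minimal _ ((isClosed_Icc.preimage hω).union (isClosed_Icc.preimage hω))
      rintro t ⟨n, hn, rfl⟩
      have hnotI : ω (ι n) ∉ I := hn.2
      have h01 := hω01 (ι n)
      rcases le_or_gt (ω (ι n)) a with hc | hc
      · exact Or.inl ⟨h01.1, hc⟩
      · refine Or.inr ⟨?_, h01.2⟩
        rcases hI with rfl | rfl | rfl | rfl
        · rw [Set.mem_Icc, not_and_or, not_le, not_le] at hnotI
          rcases hnotI with h | h
          · linarith
          · linarith
        · rw [Set.mem_Ico, not_and_or, not_le, not_lt] at hnotI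
          rcases hnotI with h | h
          · linarith
          · linarith
        · rw [Set.mem_Ioc, not_and_or, not_lt, not_le] at hnotI
          rcases hnotI with h | h
          · linarith
          · linarith
        · rw [Set.mem_Ioo, not_and_or, not_lt, not_lt] at hnotI
          rcases hnotI with h | h
          · linarith
          · linarith
    have hubc : πs (Set.univ \ S) ≤ a + (1 - b) := by
      rw [hπs]
      have hmono : P (closure (ι '' (Set.univ \ S)))
          ≤ P (ω ⁻¹' Set.Icc 0 a) + P (ω ⁻¹' Set.Icc b 1) :=
        le_trans (measure_mono himg2) (measure_union_le _ _)
      have h' := ENNReal.toReal_mono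
        (ENNReal.add_ne_top.mpr ⟨measure_ne_top P _, measure_ne_top P _⟩) hmono
      rw [ENNReal.toReal_add (measure_ne_top P _) (measure_ne_top P _),
        meas_Icc_eq P ι hUD ω hω hω01 hUDm1 (le_refl (0 : ℝ)) ha (hab.trans hb),
        meas_Icc_eq P ι hUD ω hω hω01 hUDm1 (ha.trans hab) hb (le_refl (1 : ℝ))] at h'
      linarith
    have hge : 1 ≤ πs S + πs (Set.univ \ S) := by
      rw [hπs, hπs]
      exact pis_sum_ge_one P ι hdense S
    refine ⟨?_, by linarith⟩
    rw [hY]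
    simp only [Set.mem_setOf_eq]
    linarith
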